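/- Let S ⊆ Z^n be integrally convex and let B ⊆ Z^n be an integral box (a set of the form {z ∈ Z^n : a ≤ z ≤ b} for a ≤ b in (Z ∪ {±∞})^n). Then conv(S) ∩ conv(B) = conv(S ∩ B); in particular, S ∩ B is integrally convex if nonempty. -/

import Mathlib

open Finset

/-- Descending rearrangement of a tuple. -/
noncomputable def sortDesc {n : ℕ} {α : Type*} [LinearOrder α] (x : Fin n → α) : Fin n → α :=
  x ∘ (Tuple.sort (fun i => OrderDual.toDual (x i)))

/-- `x <_dec y` : strict lexicographic comparison of descending rearrangements. -/
noncomputable def decLT {n : ℕ} {α : Type*} [LinearOrder α] (x y : Fin n → α) : Prop :=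
  ∃ i : Fin n, (∀ j : Fin n, j < i → sortDesc x j = sortDesc y j) ∧ sortDesc x i < sortDesc y i

/-- `x ≤_dec y` : lexicographic comparison of descending rearrangements. -/
noncomputable def decLE {n : ℕ} {α : Type*} [LinearOrder α] (x y : Fin n → α) : Prop :=
  sortDesc x = sortDesc y ∨ decLT x y

/-- `x` is a decreasingly minimal (dec-min) element of `S`. -/
noncomputable def DecMin {n : ℕ} (S : Set (Fin n → ℤ)) (x : Fin n → ℤ) : Prop :=
  x ∈ S ∧ ∀ y ∈ S, decLE x y

/-- Embedding of integer vectors into real vectors. -/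
def castVec {n : ℕ} (z : Fin n → ℤ) : Fin n → ℝ := fun i => (z i : ℝ)

/-- `S ⊆ ℤⁿ` is an integrally convex set: every point of `conv S` lies in the
convex hull of the points of `S` in its integral neighborhood. -/
def IntConvexSet {n : ℕ} (S : Set (Fin n → ℤ)) : Prop :=
  S.Nonempty ∧ ∀ x : Fin n → ℝ,
    x ∈ convexHull ℝ (castVec '' S) →
    x ∈ convexHull ℝ (castVec '' {z ∈ S | ∀ i, |x i - (z i : ℝ)| < 1})

/-- Any integer point in the open unit neighborhood of a point of `conv B` lies in `B`. -/
lemma nbhd_subset_box {n : ℕ} (a b : Fin n → EReal) (B : Set (Fin n → ℤ))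
    (hB : B = {z : Fin n → ℤ | ∀ i, a i ≤ ((z i : ℝ) : EReal) ∧ ((z i : ℝ) : EReal) ≤ b i})
    (x : Fin n → ℝ) (hx : x ∈ convexHull ℝ (castVec '' B))
    (z : Fin n → ℤ) (hz : ∀ i, |x i - (z i : ℝ)| < 1) : z ∈ B := by
  subst hB
  have hBne : (castVec '' {z : Fin n → ℤ | ∀ i, a i ≤ ((z i : ℝ) : EReal) ∧
      ((z i : ℝ) : EReal) ≤ b i}).Nonempty := by
    by_contra h
    rw [Set.not_nonempty_iff_eq_empty] at h
    rw [h, convexHull_empty] at hx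
    exact hx
  intro i
  have hzi := abs_lt.mp (hz i)
  constructor
  · rcases eq_or_ne (a i) ⊥ with ha | habot
    · rw [ha]; exact bot_le
    rcases eq_or_ne (a i) ⊤ with ha | hatop
    · obtain ⟨_, ⟨u, hu, _⟩⟩ := hBne
      have := (hu i).1
      rw [ha] at this
      exact absurd (lt_of_le_of_lt this (EReal.coe_lt_top _)) (lt_irrefl _)
    · set r := (a i).toReal with hr
      have ha : a i = (r : ℝ) := (EReal.coe_toReal hatop habot).symm
      have hsub : convexHull ℝ (castVec '' {z : Fin n → ℤ | ∀ i, a i ≤ ((z i : ℝ) : EReal) ∧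
          ((z i : ℝ) : EReal) ≤ b i}) ⊆ {y : Fin n → ℝ | (⌈r⌉ : ℝ) ≤ y i} := by
        apply convexHull_min
        · rintro _ ⟨u, hu, rfl⟩
          have h1 := (hu i).1
          rw [ha] at h1
          have h2 : r ≤ (u i : ℝ) := EReal.coe_le_coe_iff.mp h1
          have h3 : ⌈r⌉ ≤ u i := Int.ceil_le.mpr (by exact_mod_cast h2)
          simpa [castVec] using (by exact_mod_cast h3 : (⌈r⌉ : ℝ) ≤ (u i : ℝ))
        · exact convex_halfSpace_ge ⟨fun _ _ => rfl, fun _ _ => rfl⟩ _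
      have hxi : (⌈r⌉ : ℝ) ≤ x i := hsub hx
      have h4 : (⌈r⌉ : ℝ) - 1 < (z i : ℝ) := by linarith [hzi.2]
      have h5 : ⌈r⌉ - 1 < z i := by exact_mod_cast h4
      have h6 : ⌈r⌉ ≤ z i := by omega
      have h7 : r ≤ (z i : ℝ) := le_trans (Int.le_ceil r) (by exact_mod_cast h6)
      rw [ha]
      exact_mod_cast h7
  · rcases eq_or_ne (b i) ⊤ with hb | hbtop
    · rw [hb]; exact le_top
    rcases eq_or_ne (b i) ⊥ with hb | hbbot
    · obtain ⟨_, ⟨u, hu, _⟩⟩ := hBne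
      have := (hu i).2
      rw [hb] at this
      exact absurd (lt_of_lt_of_le (EReal.bot_lt_coe _) this) (lt_irrefl _)
    · set r := (b i).toReal with hr
      have hb : b i = (r : ℝ) := (EReal.coe_toReal hbtop hbbot).symm
      have hsub : convexHull ℝ (castVec '' {z : Fin n → ℤ | ∀ i, a i ≤ ((z i : ℝ) : EReal) ∧
          ((z i : ℝ) : EReal) ≤ b i}) ⊆ {y : Fin n → ℝ | y i ≤ (⌊r⌋ : ℝ)} := by
        apply convexHull_min
        · rintro _ ⟨u, hu, rfl⟩
          have h1 := (hu i).2
          rw [hb] at h1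
          have h2 : (u i : ℝ) ≤ r := EReal.coe_le_coe_iff.mp h1
          have h3 : u i ≤ ⌊r⌋ := Int.le_floor.mpr (by exact_mod_cast h2)
          simpa [castVec] using (by exact_mod_cast h3 : (u i : ℝ) ≤ (⌊r⌋ : ℝ))
        · exact convex_halfSpace_le ⟨fun _ _ => rfl, fun _ _ => rfl⟩ _
      have hxi : x i ≤ (⌊r⌋ : ℝ) := hsub hx
      have h4 : (z i : ℝ) < (⌊r⌋ : ℝ) + 1 := by linarith [hzi.1]
      have h5 : z i < ⌊r⌋ + 1 := by exact_mod_cast h4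
      have h6 : z i ≤ ⌊r⌋ := by omega
      have h7 : (z i : ℝ) ≤ r := le_trans (by exact_mod_cast h6) (Int.floor_le r)
      rw [hb]
      exact_mod_cast h7

theorem intconvex_cap_box (n : ℕ) (S : Set (Fin n → ℤ)) (hS : IntConvexSet S)
    (a b : Fin n → EReal) (hab : ∀ i, a i ≤ b i)
    (B : Set (Fin n → ℤ))
    (hB : B = {z : Fin n → ℤ | ∀ i, a i ≤ ((z i : ℝ) : EReal) ∧ ((z i : ℝ) : EReal) ≤ b i}) :
    convexHull ℝ (castVec '' S) ∩ convexHull ℝ (castVec '' B) =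
      convexHull ℝ (castVec '' (S ∩ B)) ∧
    ((S ∩ B).Nonempty → IntConvexSet (S ∩ B)) := by
  have key : ∀ x : Fin n → ℝ, x ∈ convexHull ℝ (castVec '' S) →
      x ∈ convexHull ℝ (castVec '' B) →
      x ∈ convexHull ℝ (castVec '' {z ∈ S ∩ B | ∀ i, |x i - (z i : ℝ)| < 1}) := by
    intro x hxS hxB
    have h1 := hS.2 x hxS
    refine convexHull_mono (Set.image_mono ?_) h1
    rintro z ⟨hzS, hzN⟩
    exact ⟨⟨hzS, nbhd_subset_box a b B hB x hxB z hzN⟩, hzN⟩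
  constructor
  · apply Set.Subset.antisymm
    · rintro x ⟨hxS, hxB⟩
      refine convexHull_mono (Set.image_mono ?_) (key x hxS hxB)
      exact fun z hz => hz.1
    · apply Set.subset_inter
      · exact convexHull_mono (Set.image_mono Set.inter_subset_left)
      · exact convexHull_mono (Set.image_mono Set.inter_subset_right)
  · intro hne
    refine ⟨hne, fun x hx => ?_⟩
    have hxS : x ∈ convexHull ℝ (castVec '' S) :=
      convexHull_mono (Set.image_mono Set.inter_subset_left) hx
    have hxB : x ∈ convexHull ℝ (castVec '' B) :=
      convexHull_mono (Set.image_mono Set.inter_subset_right) hx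
    exact key x hxS hxB
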